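/- Let n ≥ 4, R > 0 and Ω = B_R ⊂ ℝⁿ, and let ω_n denote the surface area of the unit sphere in ℝⁿ. If u ∈ C⁰(Ω̄) and w ∈ C²(Ω̄) are nonnegative radially symmetric functions satisfying −Δw + w = u in Ω, ∂_ν w = 0 on ∂Ω, and ∫_Ω u dx = m, then the radial derivative of w satisfies |∇w(x)| ≤ 2m / (ω_n |x|^{n−1}) for all x with 0 < |x| ≤ R. -/

import Mathlib

open MeasureTheory Metric Set Filter

noncomputable section

abbrev En (n : ℕ) := EuclideanSpace ℝ (Fin n)

/-- partial derivative of `f` in the `i`-th coordinate direction -/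
def pd {n : ℕ} (f : En n → ℝ) (i : Fin n) (x : En n) : ℝ :=
  fderiv ℝ f x (EuclideanSpace.single i 1)

/-- Laplacian of `f` -/
def lap {n : ℕ} (f : En n → ℝ) (x : En n) : ℝ :=
  ∑ i, pd (pd f i) i x

/-- `f` is radially symmetric on the closed ball of radius `R` -/
def radial {n : ℕ} (R : ℝ) (f : En n → ℝ) : Prop :=
  ∀ x ∈ closedBall (0 : En n) R, ∀ y ∈ closedBall (0 : En n) R, ‖x‖ = ‖y‖ → f x = f y

/-- surface area of the unit sphere in `ℝⁿ`, `ω_n = n·|B₁|` -/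
def sphereArea (n : ℕ) : ℝ := n * (volume (ball (0 : En n) 1)).toReal

set_option maxHeartbeats 2000000

section Aux

lemma inner_gradient {E : Type*} [NormedAddCommGroup E] [InnerProductSpace ℝ E]
    [CompleteSpace E] (w : E → ℝ) (x y : E) :
    (inner ℝ (gradient w x) y : ℝ) = fderiv ℝ w x y := by
  rw [gradient]; exact InnerProductSpace.toDual_symm_apply

lemma tangential_zero {E : Type*} [NormedAddCommGroup E] [InnerProductSpace ℝ E]
    (w : E → ℝ) (c : ℝ) (x v : E) (hx0 : x ≠ 0)
    (hconst : ∀ y : E, ‖y‖ = ‖x‖ → w y = c) (hv : (inner ℝ x v : ℝ) = 0) :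
    fderiv ℝ w x v = 0 := by
  rcases eq_or_ne v 0 with rfl | hv0
  · simp
  have hvpos : (0:ℝ) < ‖v‖ := norm_pos_iff.2 hv0
  have hxpos : (0:ℝ) < ‖x‖ := norm_pos_iff.2 hx0
  set a : ℝ := ‖x‖ / ‖v‖ with ha
  have hapos : 0 < a := div_pos hxpos hvpos
  set γ : ℝ → E := fun ε => Real.cos ε • x + (a * Real.sin ε) • v with hγ
  have hnorm : ∀ ε, ‖γ ε‖ = ‖x‖ := by
    intro ε
    have h1 : ‖γ ε‖ ^ 2 = ‖x‖ ^ 2 := by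
      have horth : (inner ℝ (Real.cos ε • x) ((a * Real.sin ε) • v) : ℝ) = 0 := by
        rw [inner_smul_left, inner_smul_right, hv]; ring
      have h2 := norm_add_sq_real (Real.cos ε • x) ((a * Real.sin ε) • v)
      rw [horth] at h2
      rw [hγ]
      simp only [h2, norm_smul, Real.norm_eq_abs]
      have h3 : (|a * Real.sin ε| * ‖v‖) ^2 = (Real.sin ε)^2 * ‖x‖^2 := by
        rw [abs_mul, ha, abs_div, abs_of_nonneg hxpos.le, abs_of_nonneg hvpos.le]
        field_simp
        rw [sq_abs]
      rw [h3]
      have h4 := Real.sin_sq_add_cos_sq ε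
      have h5 : (|Real.cos ε| * ‖x‖)^2 = (Real.cos ε)^2 * ‖x‖^2 := by
        rw [mul_pow, sq_abs]
      nlinarith
    have h6 := congrArg Real.sqrt h1
    rwa [Real.sqrt_sq (norm_nonneg _), Real.sqrt_sq (norm_nonneg _)] at h6
  have hγ0 : γ 0 = x := by simp [hγ]
  have hγd : HasDerivAt γ (a • v) 0 := by
    have h1 : HasDerivAt (fun ε : ℝ => Real.cos ε • x) ((-Real.sin 0) • x) 0 :=
      (Real.hasDerivAt_cos 0).smul_const x
    have h2 : HasDerivAt (fun ε : ℝ => (a * Real.sin ε) • v) ((a * Real.cos 0) • v) 0 :=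
      (((Real.hasDerivAt_sin 0).const_mul a)).smul_const v
    have := h1.add h2
    simp only [Real.sin_zero, neg_zero, zero_smul, Real.cos_zero, mul_one, zero_add] at this
    exact this
  have hcomp : ∀ ε, w (γ ε) = c := fun ε => hconst _ (hnorm ε)
  by_cases hdiff : DifferentiableAt ℝ w x
  · have hw' : HasFDerivAt w (fderiv ℝ w x) (γ 0) := hγ0.symm ▸ hdiff.hasFDerivAt
    have hD : HasDerivAt (fun ε => w (γ ε)) (fderiv ℝ w x (a • v)) 0 :=
      hw'.comp_hasDerivAt 0 hγd
    have hconst' : HasDerivAt (fun ε => w (γ ε)) 0 0 := by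
      have : (fun ε => w (γ ε)) = fun _ => c := funext hcomp
      rw [this]; exact hasDerivAt_const _ _
    have huniq := hD.unique hconst'
    rw [(fderiv ℝ w x).map_smul, smul_eq_mul] at huniq
    exact (mul_eq_zero.1 huniq).resolve_left hapos.ne'
  · rw [fderiv_zero_of_not_differentiableAt hdiff]; rfl


lemma gradient_radial_rep {E : Type*} [NormedAddCommGroup E] [InnerProductSpace ℝ E]
    [CompleteSpace E] (w : E → ℝ) (c : ℝ) (x : E) (hx0 : x ≠ 0)
    (hconst : ∀ y : E, ‖y‖ = ‖x‖ → w y = c) :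
    gradient w x = (((inner ℝ (gradient w x) x : ℝ)) / ‖x‖ ^ 2) • x := by
  set G := gradient w x with hG
  set k : ℝ := (inner ℝ G x : ℝ) / ‖x‖ ^ 2 with hk
  have hnx : (0:ℝ) < ‖x‖ := norm_pos_iff.2 hx0
  have hxv : (inner ℝ x (G - k • x) : ℝ) = 0 := by
    rw [inner_sub_right, inner_smul_right, real_inner_self_eq_norm_sq]
    rw [hk, real_inner_comm]
    field_simp
    ring
  have hGv : (inner ℝ G (G - k • x) : ℝ) = 0 := by
    rw [hG, inner_gradient]
    exact tangential_zero w c x _ hx0 hconst hxv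
  have hv0 : G - k • x = 0 := by
    have : (inner ℝ (G - k • x) (G - k • x) : ℝ) = 0 := by
      rw [inner_sub_left, hGv, real_inner_smul_left, hxv]; ring
    exact inner_self_eq_zero.1 this
  have := sub_eq_zero.1 hv0
  exact this

end Aux


/-- **Gradient estimate for the indirect signal.** Let `n ≥ 4`, `R > 0`,
`Ω = B_R ⊂ ℝⁿ` and `ω_n` be the surface area of the unit sphere in `ℝⁿ`.
If `u ∈ C⁰(Ω̄)`, `w ∈ C²(Ω̄)` are nonnegative and radially symmetric with
`-Δw + w = u` in `Ω`, `∂_ν w = 0` on `∂Ω` and `∫_Ω u = m`, then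
`|∇w(x)| ≤ 2m/(ω_n |x|^{n-1})` for all `0 < |x| ≤ R`. -/
theorem gradient_estimate_w
    (n : ℕ) (hn : 4 ≤ n) (R : ℝ) (hR : 0 < R) (m : ℝ) (u w : En n → ℝ)
    (hu : ContinuousOn u (closedBall (0 : En n) R))
    (hw : ContDiff ℝ 2 w)
    (hnonneg : ∀ x ∈ closedBall (0 : En n) R, 0 ≤ u x ∧ 0 ≤ w x)
    (hurad : radial R u) (hwrad : radial R w)
    (heq : ∀ x ∈ ball (0 : En n) R, -lap w x + w x = u x)
    (hneu : ∀ x : En n, ‖x‖ = R → (inner ℝ (gradient w x) x : ℝ) = 0)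
    (hmass : (∫ x in ball (0 : En n) R, u x) = m) :
    ∀ x : En n, 0 < ‖x‖ → ‖x‖ ≤ R →
      ‖gradient w x‖ ≤ 2 * m / (sphereArea n * ‖x‖ ^ ((n : ℝ) - 1)) := by
  have hn0 : 0 < n := by omega
  set i₀ : Fin n := ⟨0, hn0⟩ with hi₀
  obtain ⟨e, he_def⟩ : ∃ p : En n, p = EuclideanSpace.single i₀ 1 := ⟨_, rfl⟩
  have he : ‖e‖ = 1 := by simp [he_def]
  obtain ⟨f, hfE⟩ : ∃ p : ℝ → ℝ, p = fun t => w (t • e) := ⟨_, rfl⟩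
  obtain ⟨g, hgE⟩ : ∃ p : ℝ → ℝ, p = fun t => u (t • e) := ⟨_, rfl⟩
  have hfA : ∀ t : ℝ, f t = w (t • e) := fun t => by rw [hfE]
  have hgA : ∀ t : ℝ, g t = u (t • e) := fun t => by rw [hgE]
  have hsmul_mem : ∀ t : ℝ, 0 ≤ t → t ≤ R → t • e ∈ closedBall (0 : En n) R := by
    intro t ht htR
    simp only [mem_closedBall, dist_zero_right, norm_smul, he, mul_one, Real.norm_eq_abs]
    rwa [abs_of_nonneg ht]
  have hnorm_smul : ∀ t : ℝ, 0 ≤ t → ‖t • e‖ = t := by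
    intro t ht
    rw [norm_smul, he, mul_one, Real.norm_eq_abs, abs_of_nonneg ht]
  have hf_cd : ContDiff ℝ 2 f := by
    rw [hfE]; exact hw.comp (contDiff_id.smul contDiff_const)
  -- w y = f ‖y‖ on closed ball
  have hwA : ∀ y ∈ closedBall (0 : En n) R, w y = f ‖y‖ := by
    intro y hy
    have hyR : ‖y‖ ≤ R := by simpa [mem_closedBall, dist_zero_right] using hy
    rw [hfA]
    exact hwrad y hy (‖y‖ • e) (hsmul_mem _ (norm_nonneg _) hyR)
      (by rw [hnorm_smul _ (norm_nonneg _)])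
  have huA : ∀ y ∈ closedBall (0 : En n) R, u y = g ‖y‖ := by
    intro y hy
    have hyR : ‖y‖ ≤ R := by simpa [mem_closedBall, dist_zero_right] using hy
    rw [hgA]
    exact hurad y hy (‖y‖ • e) (hsmul_mem _ (norm_nonneg _) hyR)
      (by rw [hnorm_smul _ (norm_nonneg _)])
  -- derivative of f along the ray
  have hfd : ∀ t : ℝ, HasDerivAt f (fderiv ℝ w (t • e) e) t := by
    intro t
    rw [hfE]
    have hline : HasDerivAt (fun s : ℝ => s • e) e t := by
      simpa using (hasDerivAt_id t).smul_const e
    exact ((hw.differentiable two_ne_zero) (t • e)).hasFDerivAt.comp_hasDerivAt t hline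
  have hderiv_f : ∀ t : ℝ, deriv f t = fderiv ℝ w (t • e) e := fun t => (hfd t).deriv
  -- gradient representation
  have hgradrep : ∀ x : En n, 0 < ‖x‖ → ‖x‖ ≤ R →
      gradient w x = (((inner ℝ (gradient w x) x : ℝ)) / ‖x‖ ^ 2) • x := by
    intro x hx hxR
    refine gradient_radial_rep w (f ‖x‖) x (norm_pos_iff.1 hx) ?_
    intro y hy
    have hyR : ‖y‖ ≤ R := hy ▸ hxR
    rw [hwA y (by simpa [mem_closedBall, dist_zero_right] using hyR), hy]
  -- radial derivative: inner (gradient w x) x = ‖x‖ * deriv f ‖x‖ for interior x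
  have hinner_rad : ∀ x : En n, 0 < ‖x‖ → ‖x‖ < R →
      (inner ℝ (gradient w x) x : ℝ) = ‖x‖ * deriv f ‖x‖ := by
    intro x hx hxR
    set r := ‖x‖ with hr
    set xh : En n := r⁻¹ • x with hxh_def
    have hrne : r ≠ 0 := hx.ne'
    have hxh : ‖xh‖ = 1 := by
      rw [hxh_def, norm_smul, Real.norm_eq_abs, abs_of_nonneg (inv_nonneg.2 hx.le), ← hr]
      field_simp
    have hxeq : r • xh = x := by rw [hxh_def, smul_smul]; field_simp; simp
    have hδ : HasDerivAt (fun t : ℝ => w (t • xh)) (fderiv ℝ w x xh) r := by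
      have hline : HasDerivAt (fun t : ℝ => t • xh) xh r := by
        simpa using (hasDerivAt_id r).smul_const xh
      have hF : HasFDerivAt w (fderiv ℝ w x) (r • xh) := by
        rw [hxeq]; exact ((hw.differentiable two_ne_zero) x).hasFDerivAt
      exact hF.comp_hasDerivAt r hline
    have hev : (fun t : ℝ => w (t • xh)) =ᶠ[nhds r] f := by
      filter_upwards [Ioo_mem_nhds hx hxR] with t ht
      have h1 : ‖t • xh‖ = t := by
        rw [norm_smul, hxh, mul_one, Real.norm_eq_abs, abs_of_nonneg ht.1.le]
      have h2 : t • xh ∈ closedBall (0 : En n) R := by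
        simp only [mem_closedBall, dist_zero_right, h1]; exact ht.2.le
      rw [hwA (t • xh) h2, h1]
    have hfd' : HasDerivAt f (fderiv ℝ w x xh) r := hδ.congr_of_eventuallyEq hev.symm
    rw [inner_gradient]
    nth_rewrite 2 [← hxeq]
    rw [(fderiv ℝ w x).map_smul, hfd'.deriv, smul_eq_mul]
  -- norm of gradient
  have hnormgrad : ∀ x : En n, 0 < ‖x‖ → ‖x‖ < R → ‖gradient w x‖ = |deriv f ‖x‖| := by
    intro x hx hxR
    have h1 := hgradrep x hx (le_of_lt hxR)
    have h2 := hinner_rad x hx hxR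
    rw [h2] at h1
    rw [h1, norm_smul, Real.norm_eq_abs]
    rw [abs_div, abs_mul, abs_of_nonneg (norm_nonneg x), abs_of_nonneg (sq_nonneg ‖x‖)]
    have hxne : ‖x‖ ≠ 0 := hx.ne'
    field_simp
  -- boundary: gradient vanishes
  have hbdry : ∀ x : En n, ‖x‖ = R → gradient w x = 0 := by
    intro x hxR
    have h1 := hgradrep x (hxR ▸ hR) (le_of_eq hxR)
    rw [hneu x hxR] at h1
    simpa using h1
  have hf'R : deriv f R = 0 := by
    have h1 : ‖(R • e : En n)‖ = R := hnorm_smul R hR.le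
    rw [hderiv_f]
    rw [← inner_gradient w (R • e) e, hbdry _ h1]
    simp
  -- pd formula in the interior
  have hpdf : ∀ (y : En n), 0 < ‖y‖ → ‖y‖ < R → ∀ i : Fin n,
      pd w i y = deriv f ‖y‖ / ‖y‖ * y i := by
    intro y hy hyR i
    have h3 : pd w i y = (inner ℝ (gradient w y) (EuclideanSpace.single i (1:ℝ)) : ℝ) :=
      (inner_gradient w y _).symm
    rw [h3, hgradrep y hy hyR.le, real_inner_smul_left, hinner_rad y hy hyR]
    have h4 : (inner ℝ y (EuclideanSpace.single i (1:ℝ)) : ℝ) = y i := by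
      simp [EuclideanSpace.inner_single_right]
    rw [h4]
    have hyne : ‖y‖ ≠ 0 := hy.ne'
    field_simp
  -- C¹ smoothness of deriv f
  have hf1 : ContDiff ℝ 1 (deriv f) := by
    have h2 : ContDiff ℝ (1+1) f := by
      have : ((2:ℕ) : WithTop ℕ∞) = 1 + 1 := by norm_num
      rw [← this]; exact hf_cd
    exact (contDiff_succ_iff_deriv.mp h2).2.2
  have hf'd : ∀ t, HasDerivAt (deriv f) (deriv (deriv f) t) t := fun t =>
    ((hf1.differentiable one_ne_zero) t).hasDerivAt
  -- second derivative / Laplacian in radial coordinates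
  have hlap : ∀ r : ℝ, 0 < r → r < R →
      lap w (r • e) = deriv (deriv f) r + ((n : ℝ) - 1) * deriv f r / r := by
    intro r hr hrR
    have hrne : r ≠ 0 := hr.ne'
    have hpd_cd : ∀ i : Fin n, ContDiff ℝ 1 (pd w i) := by
      intro i
      have hrepr : pd w i = fun y =>
          (ContinuousLinearMap.apply ℝ ℝ (EuclideanSpace.single i (1:ℝ))) (fderiv ℝ w y) := rfl
      rw [hrepr]
      exact (ContinuousLinearMap.apply ℝ ℝ (EuclideanSpace.single i (1:ℝ))).contDiff.comp
        (hw.fderiv_right (by norm_num))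
    have hψd : ∀ i : Fin n, HasDerivAt
        (fun ε : ℝ => pd w i (r • e + ε • EuclideanSpace.single i (1:ℝ)))
        (pd (pd w i) i (r • e)) 0 := by
      intro i
      have hline : HasDerivAt (fun ε : ℝ => r • e + ε • EuclideanSpace.single i (1:ℝ))
          (EuclideanSpace.single i (1:ℝ)) 0 := by
        simpa using
          (((hasDerivAt_id (0:ℝ)).smul_const (EuclideanSpace.single i (1:ℝ))).const_add (r • e))
      have h0 : r • e + (0:ℝ) • EuclideanSpace.single i (1:ℝ) = r • e := by simp
      have hdiff : HasFDerivAt (pd w i) (fderiv ℝ (pd w i) (r • e))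
          (r • e + (0:ℝ) • EuclideanSpace.single i (1:ℝ)) := by
        rw [h0]; exact (((hpd_cd i).differentiable one_ne_zero) (r • e)).hasFDerivAt
      exact hdiff.comp_hasDerivAt 0 hline
    -- the case i = i₀
    have hcase0 : pd (pd w i₀) i₀ (r • e) = deriv (deriv f) r := by
      have hev : (fun ε : ℝ => pd w i₀ (r • e + ε • EuclideanSpace.single i₀ (1:ℝ)))
          =ᶠ[nhds (0:ℝ)] fun ε => deriv f (r + ε) := by
        filter_upwards [Ioo_mem_nhds (a := -r) (b := R - r) (by linarith) (by linarith)] with ε hε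
        have hsum : r • e + ε • EuclideanSpace.single i₀ (1:ℝ) = (r + ε) • e := by
          rw [← he_def, add_smul]
        have hre : 0 < r + ε := by have := hε.1; simp only [mem_Ioo] at hε; linarith [hε.1]
        have hreR : r + ε < R := by simp only [mem_Ioo] at hε; linarith [hε.2]
        have hnre : ‖((r+ε) • e : En n)‖ = r + ε := hnorm_smul _ hre.le
        rw [hsum, hpdf _ (by rw [hnre]; exact hre) (by rw [hnre]; exact hreR) i₀, hnre]
        have hco : ((r + ε) • e : En n) i₀ = r + ε := by
          simp [he_def, EuclideanSpace.single_apply]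
        rw [hco]
        field_simp
      have hshift : HasDerivAt (fun ε : ℝ => deriv f (r + ε)) (deriv (deriv f) r) 0 := by
        have h1 : HasDerivAt (fun ε : ℝ => r + ε) 1 0 := by
          simpa using (hasDerivAt_id (0:ℝ)).const_add r
        have h2 := (hf'd (r + 0)).comp 0 h1
        simp only [add_zero, mul_one] at h2
        exact h2
      exact (hψd i₀).unique (hshift.congr_of_eventuallyEq hev)
    -- the case i ≠ i₀
    have hcase1 : ∀ i : Fin n, i ≠ i₀ → pd (pd w i) i (r • e) = deriv f r / r := by
      intro i hi
      set v : En n := EuclideanSpace.single i (1:ℝ) with hv_def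
      have hv : ‖v‖ = 1 := by simp [hv_def]
      have horth : (inner ℝ e v : ℝ) = 0 := by
        rw [he_def, hv_def]
        rw [EuclideanSpace.inner_single_left]
        simp only [EuclideanSpace.single_apply, one_mul, map_one]
        rw [if_neg (Ne.symm hi)]
      have hnormy : ∀ ε : ℝ, ‖r • e + ε • v‖ = Real.sqrt (r^2 + ε^2) := by
        intro ε
        have horth2 : (inner ℝ (r • e) (ε • v) : ℝ) = 0 := by
          rw [real_inner_smul_left, real_inner_smul_right, horth]; ring
        have h2 := norm_add_sq_real (r • e) (ε • v)
        rw [horth2] at h2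
        have h3 : ‖r • e + ε • v‖^2 = r^2 + ε^2 := by
          rw [h2, norm_smul, norm_smul, he, hv]
          simp [Real.norm_eq_abs, mul_pow, sq_abs]
        rw [← Real.sqrt_sq (norm_nonneg (r • e + ε • v)), h3]
      have hylb : ∀ ε : ℝ, r ≤ ‖r • e + ε • v‖ := by
        intro ε; rw [hnormy]
        calc r = Real.sqrt (r^2) := (Real.sqrt_sq hr.le).symm
        _ ≤ _ := Real.sqrt_le_sqrt (by nlinarith)
      have hyub : ∀ ε : ℝ, |ε| < R - r → ‖r • e + ε • v‖ < R := by
        intro ε hε; rw [hnormy]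
        have h5 : Real.sqrt (r^2+ε^2) ≤ r + |ε| := by
          rw [show r + |ε| = Real.sqrt ((r+|ε|)^2) from
            (Real.sqrt_sq (by positivity)).symm]
          apply Real.sqrt_le_sqrt
          nlinarith [abs_nonneg ε, sq_abs ε]
        linarith
      have hcoord : ∀ ε : ℝ, (r • e + ε • v) i = ε := by
        intro ε
        have : (r • e + ε • v) i = r * (e i) + ε * (v i) := rfl
        rw [this]
        simp [he_def, hv_def, EuclideanSpace.single_apply, hi]
      have hev : (fun ε : ℝ => pd w i (r • e + ε • v)) =ᶠ[nhds (0:ℝ)]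
          fun ε => deriv f (Real.sqrt (r^2+ε^2)) / Real.sqrt (r^2+ε^2) * ε := by
        filter_upwards [Ioo_mem_nhds (a := -(R-r)) (b := R-r) (by linarith) (by linarith)] with ε hε
        simp only [mem_Ioo] at hε
        have habs : |ε| < R - r := abs_lt.2 ⟨hε.1, hε.2⟩
        have h0 : 0 < ‖r • e + ε • v‖ := lt_of_lt_of_le hr (hylb ε)
        rw [hpdf _ h0 (hyub ε habs) i, hnormy, hcoord]
      have hBne : r^2 + (0:ℝ)^2 ≠ 0 := by positivity
      have hB0 : Real.sqrt (r^2 + (0:ℝ)^2) = r := by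
        simp [Real.sqrt_sq hr.le]
      have hBd : HasDerivAt (fun ε : ℝ => Real.sqrt (r^2 + ε^2))
          (1 / (2 * Real.sqrt (r^2 + (0:ℝ)^2)) * (2 * (0:ℝ)^1)) 0 := by
        have h1 : HasDerivAt (fun ε : ℝ => r^2 + ε^2) (2 * (0:ℝ)^1) 0 :=
          (hasDerivAt_pow 2 (0:ℝ)).const_add (r^2)
        exact (Real.hasDerivAt_sqrt hBne).comp 0 h1
      have hNd : HasDerivAt (fun ε : ℝ => deriv f (Real.sqrt (r^2 + ε^2)))
          (deriv (deriv f) (Real.sqrt (r^2 + (0:ℝ)^2)) *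
            (1 / (2 * Real.sqrt (r^2 + (0:ℝ)^2)) * (2 * (0:ℝ)^1))) 0 :=
        (hf'd _).comp 0 hBd
      have hB0ne : Real.sqrt (r^2 + (0:ℝ)^2) ≠ 0 := by rw [hB0]; exact hrne
      have hAd := hNd.div hBd hB0ne
      have hψ'd := hAd.mul (hasDerivAt_id (0:ℝ))
      have hval : HasDerivAt
          (fun ε : ℝ => deriv f (Real.sqrt (r^2+ε^2)) / Real.sqrt (r^2+ε^2) * ε)
          (deriv f r / r) 0 := by
        refine hψ'd.congr_deriv ?_
        rw [hB0]
        simp [Real.sqrt_sq hr.le]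
      exact (hψd i).unique (hval.congr_of_eventuallyEq hev)
    -- summing up
    show (∑ i, pd (pd w i) i (r • e)) = _
    rw [← Finset.add_sum_erase _ _ (Finset.mem_univ i₀), hcase0]
    rw [Finset.sum_congr rfl (fun i hi => hcase1 i (Finset.ne_of_mem_erase hi))]
    rw [Finset.sum_const, Finset.card_erase_of_mem (Finset.mem_univ i₀), Finset.card_univ,
      Fintype.card_fin, nsmul_eq_mul, Nat.cast_sub (by omega : 1 ≤ n)]
    push_cast
    ring
  -- the ODE for f
  have hODE : ∀ r : ℝ, 0 < r → r < R →
      deriv (deriv f) r + ((n : ℝ) - 1) * deriv f r / r = f r - g r := by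
    intro r hr hrR
    have hmem : r • e ∈ ball (0 : En n) R := by
      simp only [mem_ball, dist_zero_right]
      rw [hnorm_smul r hr.le]; exact hrR
    linarith only [heq (r • e) hmem, hlap r hr hrR, hfA r, hgA r]
  -- continuity facts
  have hgcont : ContinuousOn g (Icc 0 R) := by
    rw [hgE]
    apply hu.comp (Continuous.continuousOn (continuous_id.smul continuous_const : Continuous fun t : ℝ => t • e))
    intro t ht
    exact hsmul_mem t ht.1 ht.2
  have hfcont : Continuous f := hf_cd.continuous
  have hhcont : ContinuousOn (fun t : ℝ => t ^ (n-1) * (f t - g t)) (Icc 0 R) :=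
    (continuous_pow _).continuousOn.mul ((hfcont.continuousOn).sub hgcont)
  have hφcont : ContinuousOn (fun t : ℝ => t ^ (n-1) * (f t + g t)) (Icc 0 R) :=
    (continuous_pow _).continuousOn.mul ((hfcont.continuousOn).add hgcont)
  have hgpcont : ContinuousOn (fun t : ℝ => t ^ (n-1) * g t) (Icc 0 R) :=
    (continuous_pow _).continuousOn.mul hgcont
  -- FTC
  have hFTC : ∀ r : ℝ, 0 ≤ r → r < R →
      r ^ (n - 1) * deriv f r = ∫ t in (0:ℝ)..r, t ^ (n - 1) * (f t - g t) := by
    intro r hr0 hrR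
    have hderiv : ∀ t ∈ uIcc (0:ℝ) r,
        HasDerivAt (fun s : ℝ => s ^ (n-1) * deriv f s) (t ^ (n-1) * (f t - g t)) t := by
      intro t ht
      rw [uIcc_of_le hr0] at ht
      have hprod := (hasDerivAt_pow (n-1) t).mul (hf'd t)
      rcases eq_or_lt_of_le ht.1 with rfl | h0
      · refine hprod.congr_deriv ?_
        rw [zero_pow (by omega : n-1-1 ≠ 0), zero_pow (by omega : n-1 ≠ 0)]
        ring
      · have htR : t < R := lt_of_le_of_lt ht.2 hrR
        have htne : t ≠ 0 := h0.ne'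
        have hODEt := hODE t h0 htR
        have heqv : ((n-1:ℕ):ℝ) * t ^ (n-1-1) * deriv f t + t ^ (n-1) * deriv (deriv f) t
            = t ^ (n-1) * (f t - g t) := by
          rw [← hODEt]
          have hpow : t ^ (n-1) = t ^ (n-1-1) * t := by
            rw [← pow_succ]; congr 1; omega
          rw [hpow, Nat.cast_sub (by omega : 1 ≤ n), Nat.cast_one]
          field_simp
          ring
        rw [← heqv]
        exact hprod
    have hint : IntervalIntegrable (fun t : ℝ => t ^ (n-1) * (f t - g t)) volume 0 r := by
      apply ContinuousOn.intervalIntegrable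
      apply hhcont.mono
      rw [uIcc_of_le hr0]
      exact Icc_subset_Icc le_rfl hrR.le
    have hsub := intervalIntegral.integral_eq_sub_of_hasDerivAt hderiv hint
    rw [hsub, zero_pow (by omega : n-1 ≠ 0)]
    ring
  -- the total integral vanishes
  have htotal : (∫ t in (0:ℝ)..R, t ^ (n-1) * (f t - g t)) = 0 := by
    have hintR : IntegrableOn (fun t : ℝ => t ^ (n-1) * (f t - g t)) (uIcc (0:ℝ) R) volume := by
      rw [uIcc_of_le hR.le]
      exact hhcont.integrableOn_compact isCompact_Icc
    have hP : ContinuousOn (fun x : ℝ => ∫ t in (0:ℝ)..x, t ^ (n-1) * (f t - g t))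
        (uIcc (0:ℝ) R) := intervalIntegral.continuousOn_primitive_interval hintR
    haveI hne : (nhdsWithin R (Ico (0:ℝ) R)).NeBot := by
      apply mem_closure_iff_nhdsWithin_neBot.mp
      rw [closure_Ico hR.ne]
      exact ⟨hR.le, le_rfl⟩
    have htP : Tendsto (fun x : ℝ => ∫ t in (0:ℝ)..x, t ^ (n-1) * (f t - g t))
        (nhdsWithin R (Ico 0 R)) (nhds (∫ t in (0:ℝ)..R, t ^ (n-1) * (f t - g t))) := by
      refine Tendsto.mono_left (hP.continuousWithinAt right_mem_uIcc) (nhdsWithin_mono R ?_)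
      rw [uIcc_of_le hR.le]; exact Ico_subset_Icc_self
    have htG : Tendsto (fun s : ℝ => s ^ (n-1) * deriv f s) (nhdsWithin R (Ico 0 R))
        (nhds (R ^ (n-1) * deriv f R)) :=
      (((continuous_pow (n-1)).mul hf1.continuous).tendsto R).mono_left nhdsWithin_le_nhds
    have hcong : (fun s : ℝ => s ^ (n-1) * deriv f s) =ᶠ[nhdsWithin R (Ico (0:ℝ) R)]
        (fun x : ℝ => ∫ t in (0:ℝ)..x, t ^ (n-1) * (f t - g t)) :=
      eventually_mem_nhdsWithin.mono (fun x hx => hFTC x hx.1 hx.2)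
    have huniq := tendsto_nhds_unique (htG.congr' hcong) htP
    rw [← huniq, hf'R, mul_zero]
  -- positivity of the sphere area
  have hSA : 0 < sphereArea n := by
    have h1 : (0:ℝ) < (volume (ball (0 : En n) 1)).toReal := by
      apply ENNReal.toReal_pos
      · exact (measure_ball_pos volume (0 : En n) one_pos).ne'
      · exact (measure_ball_lt_top).ne
    have h2 : (0:ℝ) < n := by exact_mod_cast hn0
    exact mul_pos h2 h1
  -- mass identity
  have hmass' : sphereArea n * (∫ t in (0:ℝ)..R, t ^ (n-1) * g t) = m := by
    haveI : Nontrivial (En n) :=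
      ⟨⟨e, 0, fun h => by rw [h, norm_zero] at he; exact one_ne_zero he.symm⟩⟩
    have hind : ∀ x : En n, (ball (0:En n) R).indicator u x = (Iio R).indicator g ‖x‖ := by
      intro x
      by_cases hx : ‖x‖ < R
      · rw [indicator_of_mem (by simpa [mem_ball, dist_zero_right] using hx) u,
            indicator_of_mem (by exact hx) g]
        exact huA x (by simpa [mem_closedBall, dist_zero_right] using hx.le)
      · rw [indicator_of_notMem (by simpa [mem_ball, dist_zero_right] using hx) u,
            indicator_of_notMem (by exact hx) g]
    have h1 : (∫ x in ball (0:En n) R, u x) = ∫ x : En n, (Iio R).indicator g ‖x‖ := by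
      rw [← integral_indicator measurableSet_ball]
      congr 1
      funext x
      exact hind x
    have hdim : Module.finrank ℝ (En n) = n := by
      simp [finrank_euclideanSpace]
    have h2 := integral_fun_norm_addHaar (volume : Measure (En n)) ((Iio R).indicator g)
    rw [hdim] at h2
    have h3 : (∫ y in Ioi (0:ℝ), y ^ (n-1) • (Iio R).indicator g y)
        = ∫ t in (0:ℝ)..R, t ^ (n-1) * g t := by
      have h4 : (fun y : ℝ => y ^ (n-1) • (Iio R).indicator g y)
          = fun y : ℝ => (Iio R).indicator (fun t : ℝ => t ^ (n-1) * g t) y := by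
        funext y
        by_cases hy : y < R
        · rw [indicator_of_mem (by exact hy) g, indicator_of_mem (by exact hy), smul_eq_mul]
        · rw [indicator_of_notMem (by exact hy) g, indicator_of_notMem (by exact hy),
            smul_zero]
      rw [h4, setIntegral_indicator measurableSet_Iio, Ioi_inter_Iio,
        intervalIntegral.integral_of_le hR.le, integral_Ioc_eq_integral_Ioo]
    rw [h3] at h2
    rw [← hmass, h1, h2, nsmul_eq_mul, smul_eq_mul]
    unfold sphereArea
    simp only [Measure.real]
    ring
  -- conclusion
  intro x hx hxR
  have hm0 : 0 ≤ m := by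
    rw [← hmass]
    apply setIntegral_nonneg measurableSet_ball
    intro y hy
    exact (hnonneg y (ball_subset_closedBall hy)).1
  have hpow_eq : ‖x‖ ^ ((n:ℝ)-1) = ‖x‖ ^ (n-1 : ℕ) := by
    rw [← Real.rpow_natCast ‖x‖ (n-1)]
    congr 1
    rw [Nat.cast_sub (by omega), Nat.cast_one]
  have hpowpos : 0 < ‖x‖ ^ (n-1 : ℕ) := pow_pos hx _
  rcases eq_or_lt_of_le hxR with hbd | hlt
  · rw [hbdry x hbd, norm_zero]
    apply div_nonneg (by linarith)
    exact mul_nonneg hSA.le (Real.rpow_nonneg (norm_nonneg x) _)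
  · -- interior case
    have hsub1 : Icc (0:ℝ) ‖x‖ ⊆ Icc (0:ℝ) R := Icc_subset_Icc le_rfl hlt.le
    have hsub2 : Icc ‖x‖ R ⊆ Icc (0:ℝ) R := Icc_subset_Icc hx.le le_rfl
    have hint1 : IntervalIntegrable (fun t : ℝ => t ^ (n-1) * (f t + g t)) volume 0 ‖x‖ := by
      apply ContinuousOn.intervalIntegrable
      apply hφcont.mono
      rw [uIcc_of_le hx.le]; exact hsub1
    have hint2 : IntervalIntegrable (fun t : ℝ => t ^ (n-1) * (f t + g t)) volume ‖x‖ R := by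
      apply ContinuousOn.intervalIntegrable
      apply hφcont.mono
      rw [uIcc_of_le hlt.le]; exact hsub2
    have hinth : IntervalIntegrable (fun t : ℝ => t ^ (n-1) * (f t - g t)) volume 0 R := by
      apply ContinuousOn.intervalIntegrable
      apply hhcont.mono
      rw [uIcc_of_le hR.le]
    have hinthx : IntervalIntegrable (fun t : ℝ => t ^ (n-1) * (f t - g t)) volume 0 ‖x‖ := by
      apply ContinuousOn.intervalIntegrable
      apply hhcont.mono
      rw [uIcc_of_le hx.le]; exact hsub1
    have hintg2 : IntervalIntegrable (fun t : ℝ => 2 * (t ^ (n-1) * g t)) volume 0 R := by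
      apply ContinuousOn.intervalIntegrable
      apply ContinuousOn.mono (continuousOn_const.mul hgpcont)
      rw [uIcc_of_le hR.le]
    have hnonneg_t : ∀ t : ℝ, 0 ≤ t → t ≤ R → 0 ≤ f t ∧ 0 ≤ g t := by
      intro t ht0 htR
      constructor
      · rw [hfA]; exact (hnonneg _ (hsmul_mem t ht0 htR)).2
      · rw [hgA]; exact (hnonneg _ (hsmul_mem t ht0 htR)).1
    have hkey : ‖x‖ ^ (n-1) * |deriv f ‖x‖| ≤ 2 * (m / sphereArea n) := by
      have habs2 : ‖x‖ ^ (n-1) * |deriv f ‖x‖| = |‖x‖ ^ (n-1) * deriv f ‖x‖| := by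
        rw [abs_mul, abs_of_nonneg (pow_nonneg (norm_nonneg x) _)]
      rw [habs2, hFTC ‖x‖ hx.le hlt]
      calc |∫ t in (0:ℝ)..‖x‖, t ^ (n-1) * (f t - g t)|
          ≤ ∫ t in (0:ℝ)..‖x‖, |t ^ (n-1) * (f t - g t)| :=
            intervalIntegral.abs_integral_le_integral_abs hx.le
        _ ≤ ∫ t in (0:ℝ)..‖x‖, t ^ (n-1) * (f t + g t) := by
            apply intervalIntegral.integral_mono_on hx.le hinthx.abs hint1
            intro t ht
            have ht0 : 0 ≤ t := ht.1
            have htR : t ≤ R := le_trans ht.2 hlt.le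
            obtain ⟨hf0, hg0⟩ := hnonneg_t t ht0 htR
            rw [abs_mul, abs_of_nonneg (pow_nonneg ht0 _)]
            have h5 : |f t - g t| ≤ f t + g t := by
              rw [abs_le]; constructor <;> linarith
            exact mul_le_mul_of_nonneg_left h5 (pow_nonneg ht0 _)
        _ ≤ ∫ t in (0:ℝ)..R, t ^ (n-1) * (f t + g t) := by
            rw [← intervalIntegral.integral_add_adjacent_intervals hint1 hint2]
            have h6 : 0 ≤ ∫ t in (‖x‖)..R, t ^ (n-1) * (f t + g t) := by
              apply intervalIntegral.integral_nonneg hlt.le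
              intro t ht
              obtain ⟨hf0, hg0⟩ := hnonneg_t t (le_trans hx.le ht.1) ht.2
              have ht0 : (0:ℝ) ≤ t := le_trans hx.le ht.1
              positivity
            linarith
        _ = 2 * (m / sphereArea n) := by
            have hsplit : (∫ t in (0:ℝ)..R, t ^ (n-1) * (f t + g t))
                = (∫ t in (0:ℝ)..R, t ^ (n-1) * (f t - g t))
                  + ∫ t in (0:ℝ)..R, 2 * (t ^ (n-1) * g t) := by
              rw [← intervalIntegral.integral_add hinth hintg2]
              congr 1; funext t; ring
            rw [hsplit, htotal, zero_add, intervalIntegral.integral_const_mul]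
            have h7 : (∫ t in (0:ℝ)..R, t ^ (n-1) * g t) = m / sphereArea n := by
              rw [eq_div_iff hSA.ne']
              linarith [hmass']
            rw [h7]
    rw [hnormgrad x hx hlt, hpow_eq, le_div_iff₀ (by positivity)]
    calc |deriv f ‖x‖| * (sphereArea n * ‖x‖ ^ (n-1))
        = sphereArea n * (‖x‖ ^ (n-1) * |deriv f ‖x‖|) := by ring
      _ ≤ sphereArea n * (2 * (m / sphereArea n)) := mul_le_mul_of_nonneg_left hkey hSA.le
      _ = 2 * m := by field_simp
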